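/- Let N ≥ 3 and let u₁ : ℝ^N → ℂ be measurable with ∫_{ℝ^N}|u₁(x)|² dx < ∞ and ‖u₁‖_{1,1} := ∫_{ℝ^N} (1 + |x|)|u₁(x)| dx < ∞. Set ŵ₁(ξ) = ∫_{ℝ^N} u₁(x) e^{-i⟨x,ξ⟩} dx, P₁ = ∫_{ℝ^N} u₁(x) dx, û(ξ,t) = (4/π) e^{-t log(1+|ξ|²)/2} sin(πt/4) ŵ₁(ξ), and F₃(ξ,t) = (4/π) P₁ e^{-t log(1+|ξ|²)/2} sin( t √(log(1 + |ξ|²)) ). Then there exist constants C₁ > 0 and C₂ > 0 depending only on N, and T > 0, such that for all t ≥ T: ∫_{|ξ| < 1} |û(ξ,t) - F₃(ξ,t)|² dξ ≤ C₁ ‖u₁‖_{1,1}² t^{-(N+2)/2} + C₂ |P₁|² t^{-(N-2)/2}. -/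

import Mathlib

open MeasureTheory

/-- Non-normalized Fourier transform `ŵ(ξ) = ∫ u(x) e^{-i⟨x,ξ⟩} dx`. -/
noncomputable def ft {N : ℕ} (u : EuclideanSpace ℝ (Fin N) → ℂ)
    (ξ : EuclideanSpace ℝ (Fin N)) : ℂ :=
  ∫ x, u x * Complex.exp (-Complex.I * ((inner ℝ x ξ : ℝ) : ℂ))

/-- The explicit Fourier-space solution with zero initial position and
initial velocity `w₁ ξ`. -/
noncomputable def uhat0 {N : ℕ} (w₁ : EuclideanSpace ℝ (Fin N) → ℂ)
    (ξ : EuclideanSpace ℝ (Fin N)) (t : ℝ) : ℂ :=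
  ((4 / Real.pi : ℝ) : ℂ) * (Real.exp (-(t * Real.log (1 + ‖ξ‖ ^ 2)) / 2) : ℂ)
    * (Real.sin (Real.pi * t / 4) : ℂ) * w₁ ξ

/-- The leading profile `F₃`. -/
noncomputable def F₃ {N : ℕ} (P₁ : ℂ) (ξ : EuclideanSpace ℝ (Fin N)) (t : ℝ) : ℂ :=
  ((4 / Real.pi : ℝ) : ℂ) * P₁ * (Real.exp (-(t * Real.log (1 + ‖ξ‖ ^ 2)) / 2) : ℂ)
    * (Real.sin (t * Real.sqrt (Real.log (1 + ‖ξ‖ ^ 2))) : ℂ)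

lemma aux_norm_exp_eq_one (θ : ℝ) : ‖Complex.exp (-Complex.I * θ)‖ = 1 := by
  rw [Complex.norm_exp]
  simp

lemma aux_norm_exp_sub_one (θ : ℝ) :
    ‖Complex.exp (-Complex.I * θ) - 1‖ ≤ |θ| := by
  have hz : Complex.exp (-Complex.I * (θ : ℂ)) - 1
      = Complex.ofReal (Real.cos θ - 1) + Complex.ofReal (-Real.sin θ) * Complex.I := by
    rw [show -Complex.I * (θ : ℂ) = ((-θ : ℝ) : ℂ) * Complex.I by push_cast; ring,
      Complex.exp_mul_I, ← Complex.ofReal_cos, ← Complex.ofReal_sin]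
    push_cast [Real.cos_neg, Real.sin_neg]
    ring
  have hsq : ‖Complex.exp (-Complex.I * (θ : ℂ)) - 1‖ ^ 2
      = (Real.cos θ - 1) ^ 2 + (Real.sin θ) ^ 2 := by
    rw [hz, Complex.sq_norm, Complex.normSq_apply]
    simp [pow_two, Complex.cos_ofReal_re, Complex.sin_ofReal_re]
  have hb : (Real.cos θ - 1) ^ 2 + (Real.sin θ) ^ 2 ≤ θ ^ 2 := by
    nlinarith [Real.sin_sq_add_cos_sq θ, Real.one_sub_sq_div_two_le_cos (x := θ),
      Real.cos_le_one θ]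
  nlinarith [norm_nonneg (Complex.exp (-Complex.I * (θ : ℂ)) - 1), abs_nonneg θ, sq_abs θ]

lemma aux_integrable_gauss (N : ℕ) {a : ℝ} (ha : 0 < a) :
    Integrable (fun v : EuclideanSpace ℝ (Fin N) => Real.exp (-a * ‖v‖ ^ 2)) := by
  have h := (GaussianFourier.integrable_cexp_neg_mul_sq_norm_add
      (b := (a : ℂ)) (by simpa using ha) 0 (0 : EuclideanSpace ℝ (Fin N))).norm
  refine h.congr (Filter.Eventually.of_forall fun v => ?_)
  simp only [Complex.norm_exp, zero_mul, add_zero]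
  congr 1
  have : (-(a : ℂ) * (‖v‖ : ℂ) ^ 2) = ((-a * ‖v‖ ^ 2 : ℝ) : ℂ) := by push_cast; ring
  rw [this, Complex.ofReal_re]

lemma aux_weight {t r : ℝ} (ht : 0 < t) :
    r ^ 2 * Real.exp (-(t * r ^ 2 / 2)) ≤ (4 / t) * Real.exp (-(t / 4) * r ^ 2) := by
  have hs : (0:ℝ) ≤ t * r ^ 2 / 4 := by positivity
  have h1 : t * r ^ 2 / 4 * Real.exp (-(t * r ^ 2 / 4)) ≤ 1 := by
    rw [Real.exp_neg]
    have hpos := Real.exp_pos (t * r ^ 2 / 4)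
    have h2 := Real.add_one_le_exp (t * r ^ 2 / 4)
    calc t * r ^ 2 / 4 * (Real.exp (t * r ^ 2 / 4))⁻¹
        ≤ Real.exp (t * r ^ 2 / 4) * (Real.exp (t * r ^ 2 / 4))⁻¹ := by gcongr; linarith
      _ = 1 := mul_inv_cancel₀ hpos.ne'
  have hsplit : Real.exp (-(t * r ^ 2 / 2))
      = Real.exp (-(t * r ^ 2 / 4)) * Real.exp (-(t / 4) * r ^ 2) := by
    rw [← Real.exp_add]; congr 1; ring
  calc r ^ 2 * Real.exp (-(t * r ^ 2 / 2))
      = (4 / t) * (t * r ^ 2 / 4 * Real.exp (-(t * r ^ 2 / 4))) * Real.exp (-(t / 4) * r ^ 2) := by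
        rw [hsplit]; field_simp
    _ ≤ (4 / t) * 1 * Real.exp (-(t / 4) * r ^ 2) := by gcongr
    _ = (4 / t) * Real.exp (-(t / 4) * r ^ 2) := by ring

set_option maxHeartbeats 1000000 in
/-- Theorem 3.3: low-frequency asymptotic profile estimate. -/
theorem stmt_15 (N : ℕ) (hN : 3 ≤ N)
    (u₁ : EuclideanSpace ℝ (Fin N) → ℂ)
    (hmeas : AEStronglyMeasurable u₁ volume)
    (hL2 : Integrable (fun x : EuclideanSpace ℝ (Fin N) => ‖u₁ x‖ ^ 2))
    (hint : Integrable (fun x : EuclideanSpace ℝ (Fin N) => (1 + ‖x‖) * ‖u₁ x‖)) :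
    ∃ C₁ > (0 : ℝ), ∃ C₂ > (0 : ℝ), ∃ T > (0 : ℝ), ∀ t : ℝ, T ≤ t →
      (∫ ξ in Metric.ball (0 : EuclideanSpace ℝ (Fin N)) 1,
        ‖uhat0 (ft u₁) ξ t - F₃ (∫ x, u₁ x) ξ t‖ ^ 2)
      ≤ C₁ * (∫ x : EuclideanSpace ℝ (Fin N), (1 + ‖x‖) * ‖u₁ x‖) ^ 2
            * t ^ (-((N : ℝ) + 2) / 2)
        + C₂ * ‖∫ x, u₁ x‖ ^ 2 * t ^ (-((N : ℝ) - 2) / 2) := by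
  set M : ℝ := ∫ x : EuclideanSpace ℝ (Fin N), (1 + ‖x‖) * ‖u₁ x‖ with hMdef
  set P₁ : ℂ := ∫ x, u₁ x with hPdef
  clear_value M P₁
  have hπ : (0:ℝ) < Real.pi := Real.pi_pos
  have hu₁ : Integrable u₁ := by
    refine hint.mono' hmeas (Filter.Eventually.of_forall fun x => ?_)
    nlinarith [norm_nonneg (u₁ x), norm_nonneg x]
  -- Lipschitz bound on the Fourier transform at 0
  have hlip : ∀ ξ : EuclideanSpace ℝ (Fin N), ‖ft u₁ ξ - P₁‖ ≤ M * ‖ξ‖ := by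
    intro ξ
    have hcont : Continuous fun x : EuclideanSpace ℝ (Fin N) =>
        Complex.exp (-Complex.I * ((inner ℝ x ξ : ℝ) : ℂ)) := by
      have hi : Continuous fun x : EuclideanSpace ℝ (Fin N) => (inner ℝ x ξ : ℝ) :=
        continuous_id.inner continuous_const
      exact Complex.continuous_exp.comp
        (continuous_const.mul (Complex.continuous_ofReal.comp hi))
    have hintg : Integrable
        (fun x => u₁ x * Complex.exp (-Complex.I * ((inner ℝ x ξ : ℝ) : ℂ))) := by
      refine hint.mono' (hmeas.mul hcont.aestronglyMeasurable)
        (Filter.Eventually.of_forall fun x => ?_)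
      rw [norm_mul, aux_norm_exp_eq_one, mul_one]
      nlinarith [norm_nonneg (u₁ x), norm_nonneg x]
    have hdiff : ft u₁ ξ - P₁
        = ∫ x, u₁ x * (Complex.exp (-Complex.I * ((inner ℝ x ξ : ℝ) : ℂ)) - 1) := by
      rw [ft, hPdef, ← integral_sub hintg hu₁]
      congr 1; funext x; ring
    rw [hdiff]
    refine (norm_integral_le_integral_norm _).trans ?_
    have hmono : (∫ x, ‖u₁ x * (Complex.exp (-Complex.I * ((inner ℝ x ξ : ℝ) : ℂ)) - 1)‖)
        ≤ ∫ x, ((1 + ‖x‖) * ‖u₁ x‖) * ‖ξ‖ := by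
      refine integral_mono_of_nonneg
        (Filter.Eventually.of_forall fun x => norm_nonneg _)
        (hint.mul_const ‖ξ‖)
        (Filter.Eventually.of_forall fun x => ?_)
      dsimp only
      rw [norm_mul]
      have h1 : ‖Complex.exp (-Complex.I * ((inner ℝ x ξ : ℝ) : ℂ)) - 1‖ ≤ |(inner ℝ x ξ : ℝ)| :=
        aux_norm_exp_sub_one _
      have h2 : |(inner ℝ x ξ : ℝ)| ≤ ‖x‖ * ‖ξ‖ := abs_real_inner_le_norm x ξ
      have h3 : ‖u₁ x‖ * (‖x‖ * ‖ξ‖) ≤ ((1 + ‖x‖) * ‖u₁ x‖) * ‖ξ‖ := by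
        nlinarith [norm_nonneg (u₁ x), norm_nonneg x, norm_nonneg ξ]
      calc ‖u₁ x‖ * ‖Complex.exp (-Complex.I * ((inner ℝ x ξ : ℝ) : ℂ)) - 1‖
          ≤ ‖u₁ x‖ * (‖x‖ * ‖ξ‖) := by
            refine mul_le_mul_of_nonneg_left (h1.trans h2) (norm_nonneg _)
        _ ≤ ((1 + ‖x‖) * ‖u₁ x‖) * ‖ξ‖ := h3
    rw [integral_mul_const] at hmono
    rw [hMdef]
    exact hmono
  have hM0 : 0 ≤ M := by
    rw [hMdef]; exact integral_nonneg fun x => by positivity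
  refine ⟨(128 / Real.pi ^ 2) * (4 * Real.pi) ^ ((N : ℝ) / 2), by positivity,
          (128 / Real.pi ^ 2) * (4 * Real.pi) ^ ((N : ℝ) / 2), by positivity,
          1, one_pos, ?_⟩
  intro t ht
  have ht0 : (0:ℝ) < t := lt_of_lt_of_le one_pos ht
  set A : ℝ := 128 / Real.pi ^ 2 * (M ^ 2 / t) + 128 / Real.pi ^ 2 * ‖P₁‖ ^ 2 with hAdef
  clear_value A
  have hA0 : 0 ≤ A := by rw [hAdef]; positivity
  -- pointwise bound and integral comparison
  have key : (∫ ξ in Metric.ball (0 : EuclideanSpace ℝ (Fin N)) 1,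
        ‖uhat0 (ft u₁) ξ t - F₃ P₁ ξ t‖ ^ 2)
      ≤ ∫ ξ in Metric.ball (0 : EuclideanSpace ℝ (Fin N)) 1,
          A * Real.exp (-(t/4) * ‖ξ‖ ^ 2) := by
    refine integral_mono_of_nonneg
      (Filter.Eventually.of_forall fun ξ => by dsimp only; positivity)
      (((aux_integrable_gauss N (show (0:ℝ) < t/4 by positivity)).const_mul A).restrict)
      ?_
    refine (ae_restrict_iff' measurableSet_ball).2
      (Filter.Eventually.of_forall fun ξ hξ => ?_)
    show ‖uhat0 (ft u₁) ξ t - F₃ P₁ ξ t‖ ^ 2 ≤ A * Real.exp (-(t / 4) * ‖ξ‖ ^ 2)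
    have hr : ‖ξ‖ < 1 := mem_ball_zero_iff.1 hξ
    have hrn : (0:ℝ) ≤ ‖ξ‖ := norm_nonneg ξ
    set L : ℝ := Real.log (1 + ‖ξ‖ ^ 2) with hLdef
    clear_value L
    have h1r : (0:ℝ) < 1 + ‖ξ‖ ^ 2 := by positivity
    have hL0 : 0 ≤ L := by rw [hLdef]; exact Real.log_nonneg (by nlinarith)
    have hL : ‖ξ‖ ^ 2 / 2 ≤ L := by
      rw [hLdef]
      have h2 := Real.one_sub_inv_le_log_of_pos h1r
      have h3 : 1 - (1 + ‖ξ‖ ^ 2)⁻¹ = ‖ξ‖ ^ 2 / (1 + ‖ξ‖ ^ 2) := by field_simp; ring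
      rw [h3] at h2
      refine le_trans ?_ h2
      gcongr
      nlinarith
    set E : ℝ := Real.exp (-(t * L) / 2) with hEdef
    clear_value E
    have hE0 : 0 ≤ E := by rw [hEdef]; exact (Real.exp_pos _).le
    have hnorm : ‖uhat0 (ft u₁) ξ t - F₃ P₁ ξ t‖
        ≤ (4 / Real.pi) * E * (M * ‖ξ‖ + 2 * ‖P₁‖) := by
      have hsplit : uhat0 (ft u₁) ξ t - F₃ P₁ ξ t
          = ((4 / Real.pi : ℝ) : ℂ) * (E : ℂ) *
            (((Real.sin (Real.pi * t / 4) : ℝ) : ℂ) * (ft u₁ ξ - P₁)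
              + (((Real.sin (Real.pi * t / 4) : ℝ) : ℂ)
                - ((Real.sin (t * Real.sqrt L) : ℝ) : ℂ)) * P₁) := by
        simp only [uhat0, F₃, hEdef, hLdef]
        ring
      rw [hsplit, norm_mul, norm_mul, Complex.norm_real, Complex.norm_real,
        Real.norm_eq_abs, Real.norm_eq_abs, abs_of_nonneg (by positivity : (0:ℝ) ≤ 4 / Real.pi),
        abs_of_nonneg hE0]
      have hz : ‖((Real.sin (Real.pi * t / 4) : ℝ) : ℂ) * (ft u₁ ξ - P₁)
          + (((Real.sin (Real.pi * t / 4) : ℝ) : ℂ)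
            - ((Real.sin (t * Real.sqrt L) : ℝ) : ℂ)) * P₁‖
          ≤ M * ‖ξ‖ + 2 * ‖P₁‖ := by
        refine (norm_add_le _ _).trans ?_
        rw [norm_mul, norm_mul]
        have e1 : ‖((Real.sin (Real.pi * t / 4) : ℝ) : ℂ)‖ ≤ 1 := by
          rw [Complex.norm_real, Real.norm_eq_abs]; exact Real.abs_sin_le_one _
        have e2 : ‖(((Real.sin (Real.pi * t / 4) : ℝ) : ℂ)
            - ((Real.sin (t * Real.sqrt L) : ℝ) : ℂ))‖ ≤ 2 := by
          refine (norm_sub_le _ _).trans ?_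
          have := Real.abs_sin_le_one (Real.pi * t / 4)
          have := Real.abs_sin_le_one (t * Real.sqrt L)
          rw [Complex.norm_real, Complex.norm_real, Real.norm_eq_abs, Real.norm_eq_abs]
          linarith
        have e3 : ‖((Real.sin (Real.pi * t / 4) : ℝ) : ℂ)‖ * ‖ft u₁ ξ - P₁‖ ≤ M * ‖ξ‖ := by
          calc ‖((Real.sin (Real.pi * t / 4) : ℝ) : ℂ)‖ * ‖ft u₁ ξ - P₁‖
              ≤ 1 * (M * ‖ξ‖) := by
                refine mul_le_mul e1 (hlip ξ) (norm_nonneg _) zero_le_one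
            _ = M * ‖ξ‖ := one_mul _
        have e4 : ‖(((Real.sin (Real.pi * t / 4) : ℝ) : ℂ)
            - ((Real.sin (t * Real.sqrt L) : ℝ) : ℂ))‖ * ‖P₁‖ ≤ 2 * ‖P₁‖ :=
          mul_le_mul_of_nonneg_right e2 (norm_nonneg _)
        linarith
      exact mul_le_mul_of_nonneg_left hz (by positivity)
    -- squaring and Gaussian domination
    have hE2 : E ^ 2 = Real.exp (-(t * L)) := by
      rw [hEdef, sq, ← Real.exp_add]; congr 1; ring
    have hE2le : Real.exp (-(t * L)) ≤ Real.exp (-(t * ‖ξ‖ ^ 2 / 2)) := by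
      refine Real.exp_le_exp.2 ?_
      have := mul_le_mul_of_nonneg_left hL ht0.le
      nlinarith
    have hsq : ‖uhat0 (ft u₁) ξ t - F₃ P₁ ξ t‖ ^ 2
        ≤ ((4 / Real.pi) * E * (M * ‖ξ‖ + 2 * ‖P₁‖)) ^ 2 := by
      refine pow_le_pow_left₀ (norm_nonneg _) hnorm 2
    calc ‖uhat0 (ft u₁) ξ t - F₃ P₁ ξ t‖ ^ 2
        ≤ ((4 / Real.pi) * E * (M * ‖ξ‖ + 2 * ‖P₁‖)) ^ 2 := hsq
      _ = (16 / Real.pi ^ 2) * E ^ 2 * (M * ‖ξ‖ + 2 * ‖P₁‖) ^ 2 := by ring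
      _ ≤ (16 / Real.pi ^ 2) * Real.exp (-(t * ‖ξ‖ ^ 2 / 2)) * (M * ‖ξ‖ + 2 * ‖P₁‖) ^ 2 := by
          rw [hE2]
          refine mul_le_mul_of_nonneg_right
            (mul_le_mul_of_nonneg_left hE2le (by positivity)) (sq_nonneg _)
      _ ≤ (16 / Real.pi ^ 2) * Real.exp (-(t * ‖ξ‖ ^ 2 / 2))
            * (2 * M ^ 2 * ‖ξ‖ ^ 2 + 8 * ‖P₁‖ ^ 2) := by
          refine mul_le_mul_of_nonneg_left ?_ (by positivity)
          nlinarith [sq_nonneg (M * ‖ξ‖ - 2 * ‖P₁‖), norm_nonneg P₁, hM0, hrn]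
      _ = (32 / Real.pi ^ 2) * M ^ 2 * (‖ξ‖ ^ 2 * Real.exp (-(t * ‖ξ‖ ^ 2 / 2)))
            + (128 / Real.pi ^ 2) * ‖P₁‖ ^ 2 * Real.exp (-(t * ‖ξ‖ ^ 2 / 2)) := by ring
      _ ≤ (32 / Real.pi ^ 2) * M ^ 2 * ((4 / t) * Real.exp (-(t / 4) * ‖ξ‖ ^ 2))
            + (128 / Real.pi ^ 2) * ‖P₁‖ ^ 2 * Real.exp (-(t / 4) * ‖ξ‖ ^ 2) := by
          refine add_le_add
            (mul_le_mul_of_nonneg_left (aux_weight ht0) (by positivity))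
            (mul_le_mul_of_nonneg_left (Real.exp_le_exp.2 (by nlinarith [mul_nonneg ht0.le (sq_nonneg ‖ξ‖)])) (by positivity))
      _ = A * Real.exp (-(t / 4) * ‖ξ‖ ^ 2) := by rw [hAdef]; field_simp; ring
  -- evaluate the Gaussian integral
  have step2 : (∫ ξ in Metric.ball (0 : EuclideanSpace ℝ (Fin N)) 1,
        A * Real.exp (-(t/4) * ‖ξ‖ ^ 2))
      ≤ A * ((4 * Real.pi) ^ ((N : ℝ) / 2) * t ^ (-(N : ℝ) / 2)) := by
    have hint4 : (0:ℝ) < t / 4 := by positivity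
    have hg := aux_integrable_gauss N hint4
    have h1 : (∫ ξ in Metric.ball (0 : EuclideanSpace ℝ (Fin N)) 1,
          A * Real.exp (-(t/4) * ‖ξ‖ ^ 2))
        = A * ∫ ξ in Metric.ball (0 : EuclideanSpace ℝ (Fin N)) 1,
            Real.exp (-(t/4) * ‖ξ‖ ^ 2) := by
      rw [integral_const_mul]
    rw [h1]
    have h2 : (∫ ξ in Metric.ball (0 : EuclideanSpace ℝ (Fin N)) 1,
          Real.exp (-(t/4) * ‖ξ‖ ^ 2))
        ≤ ∫ ξ : EuclideanSpace ℝ (Fin N), Real.exp (-(t/4) * ‖ξ‖ ^ 2) :=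
      setIntegral_le_integral hg
        (Filter.Eventually.of_forall fun ξ => (Real.exp_pos _).le)
    have h3 : (∫ ξ : EuclideanSpace ℝ (Fin N), Real.exp (-(t/4) * ‖ξ‖ ^ 2))
        = (Real.pi / (t/4)) ^ ((N : ℝ) / 2) := by
      rw [GaussianFourier.integral_rexp_neg_mul_sq_norm hint4]
      norm_num [finrank_euclideanSpace_fin]
    have h4 : (Real.pi / (t/4)) ^ ((N : ℝ) / 2)
        = (4 * Real.pi) ^ ((N : ℝ) / 2) * t ^ (-(N : ℝ) / 2) := by
      rw [show Real.pi / (t/4) = (4 * Real.pi) * t⁻¹ by field_simp,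
        Real.mul_rpow (by positivity) (by positivity),
        Real.inv_rpow ht0.le, ← Real.rpow_neg ht0.le]
      rw [neg_div]
    refine mul_le_mul_of_nonneg_left ?_ hA0
    rw [← h4, ← h3]
    exact h2
  -- final arithmetic
  have h1 : t⁻¹ * t ^ (-(N : ℝ) / 2) = t ^ (-((N : ℝ) + 2) / 2) := by
    rw [← Real.rpow_neg_one t, ← Real.rpow_add ht0]
    congr 1; ring
  have h2 : t ^ (-(N : ℝ) / 2) ≤ t ^ (-((N : ℝ) - 2) / 2) :=
    Real.rpow_le_rpow_of_exponent_le ht (by linarith)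
  calc (∫ ξ in Metric.ball (0 : EuclideanSpace ℝ (Fin N)) 1,
        ‖uhat0 (ft u₁) ξ t - F₃ P₁ ξ t‖ ^ 2)
      ≤ A * ((4 * Real.pi) ^ ((N : ℝ) / 2) * t ^ (-(N : ℝ) / 2)) := key.trans step2
    _ = (128 / Real.pi ^ 2) * (4 * Real.pi) ^ ((N : ℝ) / 2) * M ^ 2
          * (t⁻¹ * t ^ (-(N : ℝ) / 2))
        + (128 / Real.pi ^ 2) * (4 * Real.pi) ^ ((N : ℝ) / 2) * ‖P₁‖ ^ 2
          * t ^ (-(N : ℝ) / 2) := by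
        rw [hAdef]; field_simp
    _ = (128 / Real.pi ^ 2) * (4 * Real.pi) ^ ((N : ℝ) / 2) * M ^ 2
          * t ^ (-((N : ℝ) + 2) / 2)
        + (128 / Real.pi ^ 2) * (4 * Real.pi) ^ ((N : ℝ) / 2) * ‖P₁‖ ^ 2
          * t ^ (-(N : ℝ) / 2) := by rw [h1]
    _ ≤ (128 / Real.pi ^ 2) * (4 * Real.pi) ^ ((N : ℝ) / 2) * M ^ 2
          * t ^ (-((N : ℝ) + 2) / 2)
        + (128 / Real.pi ^ 2) * (4 * Real.pi) ^ ((N : ℝ) / 2) * ‖P₁‖ ^ 2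
          * t ^ (-((N : ℝ) - 2) / 2) := by
        refine add_le_add le_rfl (mul_le_mul_of_nonneg_left h2 (by positivity))
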